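/- In the Lie algebra of the previous construction (basis {A_m : m ≥ 0} ∪ {B_n : n ≥ 0} with [A_m, A_n] = (m−n)A_{m+n−1}, [A_m, B_n] = ((a−1)m − n)B_{m+n−1} + bB_{m+n}, [B_m, B_n] = 0), the span of {B_n : n ≥ 0} is an abelian ideal, and for each p ≥ 0 the subspace 𝓛_p spanned by {A_{s+1} : s ≥ p} ∪ {B_s : s ≥ p} is a Lie subalgebra satisfying [𝓛_0, 𝓛_p] ⊆ 𝓛_p. -/

import Mathlib

/-- Index type for the basis `{A_m} ∪ {B_n}`: `Sum.inl m = A_m`, `Sum.inr n = B_n`. -/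
abbrev AnnIdx := ℕ ⊕ ℕ

/-- The bracket on basis elements (with `A_{-1} = B_{-1} = 0`). -/
noncomputable def annBasisBracket (a b : ℂ) : AnnIdx → AnnIdx → (AnnIdx →₀ ℂ)
  | Sum.inl m, Sum.inl n => Finsupp.single (Sum.inl (m + n - 1)) ((m : ℂ) - n)
  | Sum.inl m, Sum.inr n =>
      Finsupp.single (Sum.inr (m + n - 1)) ((a - 1) * m - n) +
        Finsupp.single (Sum.inr (m + n)) b
  | Sum.inr n, Sum.inl m =>
      -(Finsupp.single (Sum.inr (m + n - 1)) ((a - 1) * m - n) +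
        Finsupp.single (Sum.inr (m + n)) b)
  | Sum.inr _, Sum.inr _ => 0

/-- The bilinear extension of the basis bracket. -/
noncomputable def annBracket (a b : ℂ) (f g : AnnIdx →₀ ℂ) : AnnIdx →₀ ℂ :=
  f.sum fun i c => g.sum fun j d => (c * d) • annBasisBracket a b i j

/-- The span of `{B_n : n ≥ 0}`. -/
noncomputable def SB : Submodule ℂ (AnnIdx →₀ ℂ) :=
  Submodule.span ℂ {v | ∃ n : ℕ, v = Finsupp.single (Sum.inr n) (1 : ℂ)}

/-- The subspace `𝓛_p`, spanned by `{A_{s+1} : s ≥ p} ∪ {B_s : s ≥ p}`. -/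
noncomputable def Lp (p : ℕ) : Submodule ℂ (AnnIdx →₀ ℂ) :=
  Submodule.span ℂ
    ({v | ∃ s : ℕ, p ≤ s ∧ v = Finsupp.single (Sum.inl (s + 1)) (1 : ℂ)} ∪
      {v | ∃ s : ℕ, p ≤ s ∧ v = Finsupp.single (Sum.inr s) (1 : ℂ)})

/-! ### Linearity lemmas for `annBracket` -/

lemma annBracket_zero_right (a b : ℂ) (f : AnnIdx →₀ ℂ) : annBracket a b f 0 = 0 := by
  simp [annBracket]

lemma annBracket_zero_left (a b : ℂ) (g : AnnIdx →₀ ℂ) : annBracket a b 0 g = 0 := by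
  simp [annBracket]

lemma annBracket_add_right (a b : ℂ) (f g₁ g₂ : AnnIdx →₀ ℂ) :
    annBracket a b f (g₁ + g₂) = annBracket a b f g₁ + annBracket a b f g₂ := by
  unfold annBracket
  rw [← Finsupp.sum_add]
  refine Finsupp.sum_congr fun i _ => ?_
  exact Finsupp.sum_add_index' (fun j => by simp) (fun j d₁ d₂ => by rw [mul_add, add_smul])

lemma annBracket_add_left (a b : ℂ) (f₁ f₂ g : AnnIdx →₀ ℂ) :
    annBracket a b (f₁ + f₂) g = annBracket a b f₁ g + annBracket a b f₂ g := by
  unfold annBracket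
  refine Finsupp.sum_add_index' (fun i => by simp) (fun i c₁ c₂ => ?_)
  rw [← Finsupp.sum_add]
  exact Finsupp.sum_congr fun j _ => by rw [add_mul, add_smul]

lemma annBracket_smul_right (a b t : ℂ) (f g : AnnIdx →₀ ℂ) :
    annBracket a b f (t • g) = t • annBracket a b f g := by
  unfold annBracket
  rw [Finsupp.smul_sum]
  refine Finsupp.sum_congr fun i _ => ?_
  rw [Finsupp.sum_smul_index' (fun j => by simp), Finsupp.smul_sum]
  exact Finsupp.sum_congr fun j _ => by
    rw [smul_eq_mul, smul_smul]; ring_nf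
 
lemma annBracket_smul_left (a b t : ℂ) (f g : AnnIdx →₀ ℂ) :
    annBracket a b (t • f) g = t • annBracket a b f g := by
  unfold annBracket
  rw [Finsupp.sum_smul_index' (fun i => by simp), Finsupp.smul_sum]
  refine Finsupp.sum_congr fun i _ => ?_
  rw [Finsupp.smul_sum]
  exact Finsupp.sum_congr fun j _ => by
    rw [smul_eq_mul, smul_smul]; ring_nf

lemma annBracket_single_right (a b : ℂ) (f : AnnIdx →₀ ℂ) (j : AnnIdx) (d : ℂ) :
    annBracket a b f (Finsupp.single j d) =
      f.sum fun i c => (c * d) • annBasisBracket a b i j := by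
  unfold annBracket
  exact Finsupp.sum_congr fun i _ => Finsupp.sum_single_index (by simp)

lemma annBracket_single_single (a b : ℂ) (i j : AnnIdx) (c d : ℂ) :
    annBracket a b (Finsupp.single i c) (Finsupp.single j d) =
      (c * d) • annBasisBracket a b i j := by
  rw [annBracket_single_right]
  exact Finsupp.sum_single_index (by simp)

/-! ### Membership helpers -/

lemma single_mem_SB (k : ℕ) (c : ℂ) : Finsupp.single (Sum.inr k : AnnIdx) c ∈ SB := by
  have h : Finsupp.single (Sum.inr k : AnnIdx) c
      = c • Finsupp.single (Sum.inr k : AnnIdx) (1 : ℂ) := by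
    rw [Finsupp.smul_single, smul_eq_mul, mul_one]
  rw [h]
  exact Submodule.smul_mem _ _ (Submodule.subset_span ⟨k, rfl⟩)

lemma single_inl_mem_Lp (p t : ℕ) (h : p ≤ t) (c : ℂ) :
    Finsupp.single (Sum.inl (t + 1) : AnnIdx) c ∈ Lp p := by
  have hh : Finsupp.single (Sum.inl (t + 1) : AnnIdx) c
      = c • Finsupp.single (Sum.inl (t + 1) : AnnIdx) (1 : ℂ) := by
    rw [Finsupp.smul_single, smul_eq_mul, mul_one]
  rw [hh]
  exact Submodule.smul_mem _ _ (Submodule.subset_span (Or.inl ⟨t, h, rfl⟩))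

lemma single_inr_mem_Lp (p t : ℕ) (h : p ≤ t) (c : ℂ) :
    Finsupp.single (Sum.inr t : AnnIdx) c ∈ Lp p := by
  have hh : Finsupp.single (Sum.inr t : AnnIdx) c
      = c • Finsupp.single (Sum.inr t : AnnIdx) (1 : ℂ) := by
    rw [Finsupp.smul_single, smul_eq_mul, mul_one]
  rw [hh]
  exact Submodule.smul_mem _ _ (Submodule.subset_span (Or.inr ⟨t, h, rfl⟩))

lemma basisBracket_inr_mem_SB (a b : ℂ) (i : AnnIdx) (n : ℕ) :
    annBasisBracket a b i (Sum.inr n) ∈ SB := by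
  cases i with
  | inl m =>
    exact add_mem (single_mem_SB _ _) (single_mem_SB _ _)
  | inr m => exact zero_mem _

lemma Lp_le_L0 (p : ℕ) : Lp p ≤ Lp 0 := by
  apply Submodule.span_mono
  rintro v (⟨s, _, rfl⟩ | ⟨s, _, rfl⟩)
  · exact Or.inl ⟨s, Nat.zero_le s, rfl⟩
  · exact Or.inr ⟨s, Nat.zero_le s, rfl⟩

/-- The bracket of two good basis elements lands in `𝓛_p`. -/
lemma basisBracket_mem_Lp (a b : ℂ) (p m : ℕ) (i : AnnIdx)
    (hi : i = Sum.inl (m + 1) ∨ i = Sum.inr m) (j : AnnIdx)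
    (hj : (∃ s, p ≤ s ∧ j = Sum.inl (s + 1)) ∨ ∃ s, p ≤ s ∧ j = Sum.inr s) :
    annBasisBracket a b i j ∈ Lp p := by
  rcases hi with rfl | rfl <;> rcases hj with ⟨s, hs, rfl⟩ | ⟨s, hs, rfl⟩
  · show Finsupp.single (Sum.inl (m + 1 + (s + 1) - 1) : AnnIdx) _ ∈ Lp p
    have h : m + 1 + (s + 1) - 1 = (m + s) + 1 := by omega
    rw [h]
    exact single_inl_mem_Lp p (m + s) (le_trans hs (Nat.le_add_left s m)) _
  · show Finsupp.single (Sum.inr (m + 1 + s - 1) : AnnIdx) _ +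
        Finsupp.single (Sum.inr (m + 1 + s) : AnnIdx) b ∈ Lp p
    have h : m + 1 + s - 1 = m + s := by omega
    rw [h]
    exact add_mem (single_inr_mem_Lp p (m + s) (le_trans hs (Nat.le_add_left s m)) _)
      (single_inr_mem_Lp p (m + 1 + s) (by omega) _)
  · show -(Finsupp.single (Sum.inr (s + 1 + m - 1) : AnnIdx) _ +
        Finsupp.single (Sum.inr (s + 1 + m) : AnnIdx) b) ∈ Lp p
    have h : s + 1 + m - 1 = s + m := by omega
    rw [h]
    exact neg_mem (add_mem (single_inr_mem_Lp p (s + m) (le_trans hs (Nat.le_add_right s m)) _)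
      (single_inr_mem_Lp p (s + 1 + m) (by omega) _))
  · show (0 : AnnIdx →₀ ℂ) ∈ Lp p
    exact zero_mem _

/-- `[𝓛_0, 𝓛_p] ⊆ 𝓛_p` for single basis elements on the right. -/
lemma key (a b : ℂ) (p : ℕ) (j : AnnIdx)
    (hj : (∃ s, p ≤ s ∧ j = Sum.inl (s + 1)) ∨ ∃ s, p ≤ s ∧ j = Sum.inr s)
    (f : AnnIdx →₀ ℂ) (hf : f ∈ Lp 0) :
    annBracket a b f (Finsupp.single j 1) ∈ Lp p := by
  induction hf using Submodule.span_induction with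
  | mem v hv =>
    rcases hv with ⟨m, _, rfl⟩ | ⟨m, _, rfl⟩
    · rw [annBracket_single_single, one_mul, one_smul]
      exact basisBracket_mem_Lp a b p m _ (Or.inl rfl) j hj
    · rw [annBracket_single_single, one_mul, one_smul]
      exact basisBracket_mem_Lp a b p m _ (Or.inr rfl) j hj
  | zero => rw [annBracket_zero_left]; exact zero_mem _
  | add x y hx hy ihx ihy => rw [annBracket_add_left]; exact add_mem ihx ihy
  | smul c x hx ih => rw [annBracket_smul_left]; exact Submodule.smul_mem _ _ ih

lemma L0_bracket_Lp (a b : ℂ) (p : ℕ) (f : AnnIdx →₀ ℂ) (hf : f ∈ Lp 0)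
    (g : AnnIdx →₀ ℂ) (hg : g ∈ Lp p) : annBracket a b f g ∈ Lp p := by
  induction hg using Submodule.span_induction with
  | mem v hv =>
    rcases hv with ⟨s, hs, rfl⟩ | ⟨s, hs, rfl⟩
    · exact key a b p _ (Or.inl ⟨s, hs, rfl⟩) f hf
    · exact key a b p _ (Or.inr ⟨s, hs, rfl⟩) f hf
  | zero => rw [annBracket_zero_right]; exact zero_mem _
  | add x y hx hy ihx ihy => rw [annBracket_add_right]; exact add_mem ihx ihy
  | smul c x hx ih => rw [annBracket_smul_right]; exact Submodule.smul_mem _ _ ih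

theorem stmt_17 (a b : ℂ) :
    (∀ f : AnnIdx →₀ ℂ, ∀ g ∈ SB, annBracket a b f g ∈ SB) ∧
      (∀ f ∈ SB, ∀ g ∈ SB, annBracket a b f g = 0) ∧
      (∀ p : ℕ, ∀ f ∈ Lp p, ∀ g ∈ Lp p, annBracket a b f g ∈ Lp p) ∧
      (∀ p : ℕ, ∀ f ∈ Lp 0, ∀ g ∈ Lp p, annBracket a b f g ∈ Lp p) := by
  refine ⟨?_, ?_, ?_, ?_⟩
  · intro f g hg
    induction hg using Submodule.span_induction with
    | mem v hv =>
      obtain ⟨n, rfl⟩ := hv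
      rw [annBracket_single_right]
      exact Submodule.finsuppSum_mem _ _ _ _ fun i _ =>
        Submodule.smul_mem _ _ (basisBracket_inr_mem_SB a b i n)
    | zero => rw [annBracket_zero_right]; exact zero_mem _
    | add x y hx hy ihx ihy => rw [annBracket_add_right]; exact add_mem ihx ihy
    | smul c x hx ih => rw [annBracket_smul_right]; exact Submodule.smul_mem _ _ ih
  · intro f hf g hg
    induction hg using Submodule.span_induction with
    | mem v hv =>
      obtain ⟨n, rfl⟩ := hv
      induction hf using Submodule.span_induction with
      | mem w hw =>
        obtain ⟨m, rfl⟩ := hw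
        rw [annBracket_single_single]
        show (1 * 1 : ℂ) • (0 : AnnIdx →₀ ℂ) = 0
        simp
      | zero => rw [annBracket_zero_left]
      | add x y hx hy ihx ihy => rw [annBracket_add_left, ihx, ihy, add_zero]
      | smul c x hx ih => rw [annBracket_smul_left, ih, smul_zero]
    | zero => rw [annBracket_zero_right]
    | add x y hx hy ihx ihy => rw [annBracket_add_right, ihx, ihy, add_zero]
    | smul c x hx ih => rw [annBracket_smul_right, ih, smul_zero]
  · intro p f hf g hg
    exact L0_bracket_Lp a b p f (Lp_le_L0 p hf) g hg
  · intro p f hf g hg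
    exact L0_bracket_Lp a b p f hf g hg
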